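/- Fix Λ > 1, set a := 1 − e^{−4} + (1/3)·(1 − e^{−4})²·Λ^{−1/4}, and let Φ : ℝ → ℝ be a convex even function with Φ(z) = |z| for |z| ≥ 1/100. Define, for s ∈ [Λ, Λ + Λ^{1/4}], v_Λ(s) := (1 − e^{−4Λ/s}) + a·√((Λ + 2Λ^{1/4} − s)/(a + Λ + 2Λ^{1/4} − s)) − Λ^{−1/4}·Φ(Λ^{1/4}·((1 − e^{−4Λ/s}) − a·√((Λ + 2Λ^{1/4} − s)/(a + Λ + 2Λ^{1/4} − s)))). Then v_Λ is concave on the interval [Λ, Λ + Λ^{1/4}]. -/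

import Mathlib

open Real Set

noncomputable section

/-- A convex function equal to `|z|` outside `[-1/100,1/100]` is 1-Lipschitz. -/
lemma lip_of_convex_abs (Φ : ℝ → ℝ) (hΦconv : ConvexOn ℝ Set.univ Φ)
    (hΦabs : ∀ z : ℝ, 1 / 100 ≤ |z| → Φ z = |z|) :
    ∀ x y : ℝ, Φ x ≤ Φ y + |x - y| := by
  have key : ∀ u v : ℝ, u < v → Φ v - Φ u ≤ v - u ∧ Φ u - Φ v ≤ v - u := by
    intro u v huv
    set M : ℝ := |u| + |v| + 1 with hM
    have hanu := abs_nonneg u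
    have hanv := abs_nonneg v
    have hM1 : 1 ≤ M := by simp only [hM]; linarith
    have hvM : v < M := lt_of_le_of_lt (le_abs_self v) (by simp only [hM]; linarith)
    have huM : -M < u := by
      have := neg_abs_le u; simp only [hM]; linarith
    have hΦM : Φ M = M := by
      rw [hΦabs M (by rw [abs_of_nonneg (by linarith)]; linarith),
        abs_of_nonneg (by linarith)]
    have hΦM1 : Φ (M + 1) = M + 1 := by
      rw [hΦabs (M + 1) (by rw [abs_of_nonneg (by linarith)]; linarith),
        abs_of_nonneg (by linarith)]
    have hΦnM : Φ (-M) = M := by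
      rw [hΦabs (-M) (by rw [abs_neg, abs_of_nonneg (by linarith)]; linarith),
        abs_neg, abs_of_nonneg (by linarith)]
    have hΦnM1 : Φ (-(M + 1)) = M + 1 := by
      rw [hΦabs (-(M + 1)) (by rw [abs_neg, abs_of_nonneg (by linarith)]; linarith),
        abs_neg, abs_of_nonneg (by linarith)]
    have hvu : (0:ℝ) < v - u := by linarith
    constructor
    · have s1 := hΦconv.slope_mono_adjacent (mem_univ u) (mem_univ M) huv hvM
      have s2 := hΦconv.slope_mono_adjacent (mem_univ v) (mem_univ (M + 1)) hvM (by linarith)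
      rw [hΦM, hΦM1] at s2
      rw [hΦM] at s1
      have hr : (M + 1 - M) / (M + 1 - M) = 1 := by
        rw [show M + 1 - M = (1:ℝ) by ring]; norm_num
      have hs : (Φ v - Φ u) / (v - u) ≤ 1 := s1.trans (s2.trans hr.le)
      calc Φ v - Φ u = ((Φ v - Φ u) / (v - u)) * (v - u) := by field_simp
        _ ≤ 1 * (v - u) := by
            exact mul_le_mul_of_nonneg_right hs (le_of_lt hvu)
        _ = v - u := by ring
    · have s1 := hΦconv.slope_mono_adjacent (mem_univ (-(M+1))) (mem_univ u)
        (by linarith : -(M+1) < -M) huM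
      have s2 := hΦconv.slope_mono_adjacent (mem_univ (-M)) (mem_univ v) huM huv
      rw [hΦnM, hΦnM1] at s1
      have h1 : (M - (M + 1)) / (-M - -(M + 1)) = -1 := by norm_num
      rw [h1] at s1
      rw [hΦnM] at s2
      have hs : -1 ≤ (Φ v - Φ u) / (v - u) := s1.trans s2
      have := mul_le_mul_of_nonneg_right hs (le_of_lt hvu)
      rw [div_mul_cancel₀ _ (ne_of_gt hvu)] at this
      linarith
  intro x y
  rcases lt_trichotomy x y with h | h | h
  · have := (key x y h).2
    rw [abs_of_nonpos (by linarith : x - y ≤ 0)]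
    linarith
  · subst h; simp
  · have := (key y x h).1
    rw [abs_of_nonneg (by linarith : (0:ℝ) ≤ x - y)]
    linarith

lemma concave_combo {S : Set ℝ} {F G ψ : ℝ → ℝ} (hF : ConcaveOn ℝ S F)
    (hG : ConcaveOn ℝ S G) (hψ : ConvexOn ℝ Set.univ ψ)
    (hlip : ∀ x y : ℝ, ψ x ≤ ψ y + |x - y|) :
    ConcaveOn ℝ S (fun s => F s + G s - ψ (F s - G s)) := by
  refine ⟨hF.1, fun x hx y hy a b ha hb hab => ?_⟩
  simp only [smul_eq_mul]
  set z := a * x + b * y with hz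
  have hA := hF.2 hx hy ha hb hab
  have hB := hG.2 hx hy ha hb hab
  simp only [smul_eq_mul] at hA hB
  have h1 := hψ.2 (mem_univ (F x - G x)) (mem_univ (F y - G y)) ha hb hab
  simp only [smul_eq_mul] at h1
  rw [show a * (F x - G x) + b * (F y - G y)
      = (a * F x + b * F y) - (a * G x + b * G y) by ring] at h1
  have h2 := hlip (F z - G z) ((a * F x + b * F y) - (a * G x + b * G y))
  have habs : |F z - G z - ((a * F x + b * F y) - (a * G x + b * G y))|
      ≤ (F z - (a * F x + b * F y)) + (G z - (a * G x + b * G y)) := by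
    rw [abs_le]; constructor <;> [linarith; linarith]
  nlinarith [h1, h2, habs]

lemma concave_sqrt_comp {S : Set ℝ} {q : ℝ → ℝ} (hq : ConcaveOn ℝ S q)
    (h0 : ∀ x ∈ S, 0 ≤ q x) :
    ConcaveOn ℝ S (fun x => Real.sqrt (q x)) := by
  refine ⟨hq.1, fun x hx y hy a b ha hb hab => ?_⟩
  have h1 : a • Real.sqrt (q x) + b • Real.sqrt (q y) ≤ Real.sqrt (a • q x + b • q y) :=
    Real.strictConcaveOn_sqrt.concaveOn.2 (h0 x hx) (h0 y hy) ha hb hab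
  exact h1.trans (Real.sqrt_le_sqrt (hq.2 hx hy ha hb hab))

/-- Concavity of `s ↦ (c - s)/(e + c - s)` on a set where `c - s ≥ 0` and bounded. -/
lemma concave_ratio {e c lo hi : ℝ} (he : 0 < e) (hhi : hi ≤ c) :
    ConcaveOn ℝ (Set.Icc lo hi) (fun s => (c - s) / (e + c - s)) := by
  refine ⟨convex_Icc _ _, fun x hx y hy a b ha hb hab => ?_⟩
  simp only [smul_eq_mul]
  have hpx : 0 < e + c - x := by have := hx.2; linarith
  have hpy : 0 < e + c - y := by have := hy.2; linarith
  have hpz : 0 < e + c - (a * x + b * y) := by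
    have : a * x + b * y ≤ a * hi + b * hi :=
      add_le_add (mul_le_mul_of_nonneg_left hx.2 ha) (mul_le_mul_of_nonneg_left hy.2 hb)
    have h' : a * hi + b * hi = hi := by rw [← add_mul, hab, one_mul]
    linarith
  rw [← sub_nonneg]
  have hb' : b = 1 - a := by linarith
  subst hb'
  have heq : (c - (a * x + (1 - a) * y)) / (e + c - (a * x + (1 - a) * y))
      - (a * ((c - x) / (e + c - x)) + (1 - a) * ((c - y) / (e + c - y)))
      = e * (a * (1 - a) * (x - y) ^ 2)
        / ((e + c - x) * ((e + c - y) * (e + c - (a * x + (1 - a) * y)))) := by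
    field_simp
    ring
  rw [heq]
  have h1 : 0 ≤ a * (1 - a) := mul_nonneg ha hb
  positivity

lemma concave_exp_part (Λ : ℝ) (hΛ : 1 < Λ) :
    ConcaveOn ℝ (Set.Icc Λ (Λ + Λ ^ ((1 : ℝ) / 4)))
      (fun s => 1 - Real.exp (-(4 * Λ) / s)) := by
  have hΛ0 : (0:ℝ) < Λ := by linarith
  have hq4 : (0:ℝ) < Λ ^ ((1:ℝ)/4) := Real.rpow_pos_of_pos hΛ0 _
  have hq4le : Λ ^ ((1:ℝ)/4) ≤ Λ := by
    calc Λ ^ ((1:ℝ)/4) ≤ Λ ^ (1:ℝ) :=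
          Real.rpow_le_rpow_of_exponent_le hΛ.le (by norm_num)
      _ = Λ := Real.rpow_one Λ
  set D := Set.Icc Λ (Λ + Λ ^ ((1:ℝ)/4)) with hD
  have hintD : interior D = Set.Ioo Λ (Λ + Λ ^ ((1:ℝ)/4)) := interior_Icc
  have hpos : ∀ x ∈ D, (0:ℝ) < x := fun x hx => lt_of_lt_of_le (by linarith) hx.1
  refine concaveOn_of_hasDerivWithinAt2_nonpos (convex_Icc _ _)
    (f' := fun s => -(Real.exp (-(4*Λ)/s) * (4*Λ/s^2)))
    (f'' := fun s => -((Real.exp (-(4*Λ)/s) * (4*Λ/s^2)) * (4*Λ * (s^2)⁻¹)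
        + Real.exp (-(4*Λ)/s) * (4*Λ * (-(2*s^1) / (s^2)^2))))
    ?_ ?_ ?_ ?_
  · -- continuity
    have h1 : ContinuousOn (fun s : ℝ => -(4*Λ)/s) D :=
      ContinuousOn.div continuousOn_const continuousOn_id
        (fun x hx => ne_of_gt (hpos x hx))
    exact continuousOn_const.sub (Real.continuous_exp.comp_continuousOn h1)
  · -- first derivative
    intro x hx
    rw [hintD] at hx
    have hx0 : x ≠ 0 := ne_of_gt (by have := hx.1; linarith)
    have h0 : HasDerivAt (fun s : ℝ => -(4*Λ)/s) (4*Λ/x^2) x := by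
      have h := (hasDerivAt_inv hx0).const_mul (-(4*Λ))
      have hfe : (fun s : ℝ => -(4*Λ)/s) = fun y : ℝ => -(4*Λ) * y⁻¹ := by
        funext y; rw [div_eq_mul_inv]
      rw [hfe]
      exact h.congr_deriv (by ring)
    have h1 : HasDerivAt (fun s : ℝ => Real.exp (-(4*Λ)/s))
        (Real.exp (-(4*Λ)/x) * (4*Λ/x^2)) x := h0.exp
    exact ((h1.const_sub 1).hasDerivWithinAt)
  · -- second derivative
    intro x hx
    rw [hintD] at hx
    have hx0 : x ≠ 0 := ne_of_gt (by have := hx.1; linarith)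
    have h0 : HasDerivAt (fun s : ℝ => -(4*Λ)/s) (4*Λ/x^2) x := by
      have h := (hasDerivAt_inv hx0).const_mul (-(4*Λ))
      have hfe : (fun s : ℝ => -(4*Λ)/s) = fun y : ℝ => -(4*Λ) * y⁻¹ := by
        funext y; rw [div_eq_mul_inv]
      rw [hfe]
      exact h.congr_deriv (by ring)
    have h1 : HasDerivAt (fun s : ℝ => Real.exp (-(4*Λ)/s))
        (Real.exp (-(4*Λ)/x) * (4*Λ/x^2)) x := h0.exp
    have hsq : (fun s : ℝ => s^2) x ≠ 0 := pow_ne_zero 2 hx0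
    have h2 : HasDerivAt (fun s : ℝ => ((s^2)⁻¹ : ℝ)) (-(2*x^1) / (x^2)^2) x := by
      have := (hasDerivAt_pow 2 x).inv hsq
      exact this.congr_deriv (by norm_num)
    have h3 : HasDerivAt (fun s : ℝ => (4*Λ * (s^2)⁻¹ : ℝ)) (4*Λ * (-(2*x^1) / (x^2)^2)) x :=
      h2.const_mul (4*Λ)
    have h4 : HasDerivAt (fun s : ℝ => Real.exp (-(4*Λ)/s) * (4*Λ * (s^2)⁻¹))
        ((Real.exp (-(4*Λ)/x) * (4*Λ/x^2)) * (4*Λ * (x^2)⁻¹)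
          + Real.exp (-(4*Λ)/x) * (4*Λ * (-(2*x^1) / (x^2)^2))) x := h1.mul h3
    have h5 := h4.neg
    have hfe : (fun s : ℝ => -(Real.exp (-(4*Λ)/s) * (4*Λ/s^2)))
        = fun s : ℝ => -(Real.exp (-(4*Λ)/s) * (4*Λ * (s^2)⁻¹)) := by
      funext y; rw [div_eq_mul_inv (4*Λ) (y^2)]
    rw [hfe]
    exact h5.hasDerivWithinAt
  · -- nonpositivity
    intro x hx
    rw [hintD] at hx
    have hx1 : Λ < x := hx.1
    have hx2 : x < Λ + Λ ^ ((1:ℝ)/4) := hx.2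
    have hx0 : (0:ℝ) < x := by linarith
    have hE : (0:ℝ) < Real.exp (-(4*Λ)/x) := Real.exp_pos _
    have hle : x ≤ 2 * Λ := by linarith
    have key : (Real.exp (-(4*Λ)/x) * (4*Λ/x^2)) * (4*Λ * (x^2)⁻¹)
        + Real.exp (-(4*Λ)/x) * (4*Λ * (-(2*x^1) / (x^2)^2))
        = Real.exp (-(4*Λ)/x) * (4*Λ) * (4*Λ - 2*x) / x^4 := by
      field_simp
      ring
    show -((Real.exp (-(4*Λ)/x) * (4*Λ/x^2)) * (4*Λ * (x^2)⁻¹)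
        + Real.exp (-(4*Λ)/x) * (4*Λ * (-(2*x^1) / (x^2)^2))) ≤ 0
    rw [key]
    have hnum : 0 ≤ Real.exp (-(4*Λ)/x) * (4*Λ) * (4*Λ - 2*x) := by
      apply mul_nonneg (by positivity)
      linarith
    have := div_nonneg hnum (by positivity : (0:ℝ) ≤ x^4)
    linarith

/-- The constant `a = 1 − e^{−4} + (1/3)·(1 − e^{−4})²·Λ^{−1/4}`. -/
def aConst (Λ : ℝ) : ℝ :=
  1 - Real.exp (-4) + (1 / 3) * (1 - Real.exp (-4)) ^ 2 * Λ ^ (-(1 : ℝ) / 4)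

/-- The interpolated cap profile
`v_Λ(s) = (1 − e^{−4Λ/s}) + a·√((Λ + 2Λ^{1/4} − s)/(a + Λ + 2Λ^{1/4} − s))
  − Λ^{−1/4}·Φ(Λ^{1/4}·((1 − e^{−4Λ/s}) − a·√((Λ + 2Λ^{1/4} − s)/(a + Λ + 2Λ^{1/4} − s))))`. -/
def vProfile (Λ : ℝ) (Φ : ℝ → ℝ) (s : ℝ) : ℝ :=
  (1 - Real.exp (-(4 * Λ) / s))
  + aConst Λ * Real.sqrt ((Λ + 2 * Λ ^ ((1 : ℝ) / 4) - s)
      / (aConst Λ + Λ + 2 * Λ ^ ((1 : ℝ) / 4) - s))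
  - Λ ^ (-(1 : ℝ) / 4) * Φ (Λ ^ ((1 : ℝ) / 4) *
      ((1 - Real.exp (-(4 * Λ) / s))
        - aConst Λ * Real.sqrt ((Λ + 2 * Λ ^ ((1 : ℝ) / 4) - s)
            / (aConst Λ + Λ + 2 * Λ ^ ((1 : ℝ) / 4) - s))))

/-- For `Λ > 1` and `Φ : ℝ → ℝ` convex and even with `Φ(z) = |z|`
for `|z| ≥ 1/100`, the profile `v_Λ` is concave on `[Λ, Λ + Λ^{1/4}]`. -/
theorem stmt11 (Λ : ℝ) (hΛ : 1 < Λ) (Φ : ℝ → ℝ)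
    (hΦconv : ConvexOn ℝ Set.univ Φ) (hΦeven : ∀ z : ℝ, Φ (-z) = Φ z)
    (hΦabs : ∀ z : ℝ, 1 / 100 ≤ |z| → Φ z = |z|) :
    ConcaveOn ℝ (Set.Icc Λ (Λ + Λ ^ ((1 : ℝ) / 4))) (vProfile Λ Φ) := by
  classical
  have hΛ0 : (0:ℝ) < Λ := by linarith
  have hq4 : (0:ℝ) < Λ ^ ((1:ℝ)/4) := Real.rpow_pos_of_pos hΛ0 _
  have hnq4 : (0:ℝ) < Λ ^ (-(1:ℝ)/4) := Real.rpow_pos_of_pos hΛ0 _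
  have hcd : Λ ^ (-(1:ℝ)/4) * Λ ^ ((1:ℝ)/4) = 1 := by
    rw [← Real.rpow_add hΛ0]; norm_num
  have haC : 0 < aConst Λ := by
    have h4 : Real.exp (-4) < 1 := by
      rw [show (1:ℝ) = Real.exp 0 by rw [Real.exp_zero]]
      exact Real.exp_lt_exp.mpr (by norm_num)
    have h1 : (0:ℝ) < 1 - Real.exp (-4) := by linarith
    unfold aConst
    have h2 : (0:ℝ) ≤ (1/3) * (1 - Real.exp (-4))^2 * Λ ^ (-(1:ℝ)/4) := by positivity
    linarith
  set D := Set.Icc Λ (Λ + Λ ^ ((1:ℝ)/4)) with hDdef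
  -- concavity of the inner ratio
  have heqq : (fun s : ℝ => (Λ + 2*Λ^((1:ℝ)/4) - s) / (aConst Λ + Λ + 2*Λ^((1:ℝ)/4) - s))
      = fun s : ℝ => ((Λ + 2*Λ^((1:ℝ)/4)) - s) / (aConst Λ + (Λ + 2*Λ^((1:ℝ)/4)) - s) := by
    funext s; ring_nf
  have hq' : ConcaveOn ℝ D
      (fun s : ℝ => (Λ + 2*Λ^((1:ℝ)/4) - s) / (aConst Λ + Λ + 2*Λ^((1:ℝ)/4) - s)) := by
    rw [heqq]
    exact concave_ratio haC (by linarith)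
  have hq0 : ∀ s ∈ D,
      0 ≤ (Λ + 2*Λ^((1:ℝ)/4) - s) / (aConst Λ + Λ + 2*Λ^((1:ℝ)/4) - s) := by
    intro s hs
    have h1 : 0 ≤ Λ + 2*Λ^((1:ℝ)/4) - s := by have := hs.2; linarith
    have h2 : 0 < aConst Λ + Λ + 2*Λ^((1:ℝ)/4) - s := by have := hs.2; linarith
    exact div_nonneg h1 h2.le
  -- concavity of G
  have hGsqrt : ConcaveOn ℝ D (fun s : ℝ =>
      Real.sqrt ((Λ + 2*Λ^((1:ℝ)/4) - s) / (aConst Λ + Λ + 2*Λ^((1:ℝ)/4) - s))) :=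
    concave_sqrt_comp hq' hq0
  have hG : ConcaveOn ℝ D (fun s : ℝ =>
      aConst Λ * Real.sqrt ((Λ + 2*Λ^((1:ℝ)/4) - s) / (aConst Λ + Λ + 2*Λ^((1:ℝ)/4) - s))) := by
    have := hGsqrt.smul haC.le
    simpa [smul_eq_mul] using this
  -- concavity of F
  have hF : ConcaveOn ℝ D (fun s : ℝ => 1 - Real.exp (-(4*Λ)/s)) := concave_exp_part Λ hΛ
  -- the rescaled Φ
  set ψ : ℝ → ℝ := fun t => Λ ^ (-(1:ℝ)/4) * Φ (Λ ^ ((1:ℝ)/4) * t) with hψdef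
  have hψconv : ConvexOn ℝ Set.univ ψ := by
    refine ⟨convex_univ, fun x _ y _ a b ha hb hab => ?_⟩
    simp only [hψdef, smul_eq_mul]
    have h := hΦconv.2 (Set.mem_univ (Λ^((1:ℝ)/4) * x)) (Set.mem_univ (Λ^((1:ℝ)/4) * y))
      ha hb hab
    simp only [smul_eq_mul] at h
    rw [show Λ^((1:ℝ)/4) * (a*x + b*y)
        = a * (Λ^((1:ℝ)/4)*x) + b * (Λ^((1:ℝ)/4)*y) by ring]
    calc Λ^(-(1:ℝ)/4) * Φ (a * (Λ^((1:ℝ)/4)*x) + b * (Λ^((1:ℝ)/4)*y))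
        ≤ Λ^(-(1:ℝ)/4) * (a * Φ (Λ^((1:ℝ)/4)*x) + b * Φ (Λ^((1:ℝ)/4)*y)) :=
          mul_le_mul_of_nonneg_left h hnq4.le
      _ = a * (Λ^(-(1:ℝ)/4) * Φ (Λ^((1:ℝ)/4)*x)) + b * (Λ^(-(1:ℝ)/4) * Φ (Λ^((1:ℝ)/4)*y)) := by
          ring
  have hψlip : ∀ x y : ℝ, ψ x ≤ ψ y + |x - y| := by
    intro x y
    have h := lip_of_convex_abs Φ hΦconv hΦabs (Λ^((1:ℝ)/4)*x) (Λ^((1:ℝ)/4)*y)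
    have habs : |Λ^((1:ℝ)/4)*x - Λ^((1:ℝ)/4)*y| = Λ^((1:ℝ)/4) * |x - y| := by
      rw [← mul_sub, abs_mul, abs_of_nonneg hq4.le]
    rw [habs] at h
    have h2 := mul_le_mul_of_nonneg_left h hnq4.le
    have h3 : Λ^(-(1:ℝ)/4) * (Φ (Λ^((1:ℝ)/4)*y) + Λ^((1:ℝ)/4) * |x - y|)
        = Λ^(-(1:ℝ)/4) * Φ (Λ^((1:ℝ)/4)*y) + |x - y| := by
      rw [mul_add, ← mul_assoc, hcd, one_mul]
    rw [h3] at h2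
    simpa [hψdef] using h2
  have hmain := concave_combo hF hG hψconv hψlip
  have hfun : vProfile Λ Φ = fun s : ℝ =>
      (fun s : ℝ => 1 - Real.exp (-(4*Λ)/s)) s
      + (fun s : ℝ => aConst Λ * Real.sqrt ((Λ + 2*Λ^((1:ℝ)/4) - s)
          / (aConst Λ + Λ + 2*Λ^((1:ℝ)/4) - s))) s
      - ψ ((fun s : ℝ => 1 - Real.exp (-(4*Λ)/s)) s
          - (fun s : ℝ => aConst Λ * Real.sqrt ((Λ + 2*Λ^((1:ℝ)/4) - s)
              / (aConst Λ + Λ + 2*Λ^((1:ℝ)/4) - s))) s) := by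
    funext s
    simp only [hψdef]
    rfl
  rw [hfun]
  exact hmain


end
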